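/- Let b, d be real numbers with 0 < b < d/2 and κ = b/(d/2 + √(d²/4 - b²)). Then κ = tan((1/2) · arctan(2b / (2√(d²/4 - b²)))), i.e., the bound tan Θ ≤ tan((1/2) arctan(2‖B‖/δ)) is attained with equality in the 1×1 example. -/

import Mathlib

theorem stmt13 (b d : ℝ) (hb : 0 < b) (hbd : b < d / 2) :
    b / (d / 2 + Real.sqrt (d ^ 2 / 4 - b ^ 2)) =
      Real.tan (1 / 2 *
        Real.arctan (2 * b / (2 * Real.sqrt (d ^ 2 / 4 - b ^ 2)))) := by
  set s := Real.sqrt (d ^ 2 / 4 - b ^ 2) with hsdef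
  have hpos : 0 < d ^ 2 / 4 - b ^ 2 := by nlinarith
  have hs : 0 < s := Real.sqrt_pos.mpr hpos
  have hs2 : s ^ 2 = d ^ 2 / 4 - b ^ 2 := Real.sq_sqrt hpos.le
  have hds : 0 < d / 2 + s := by nlinarith
  set κ := b / (d / 2 + s) with hκdef
  have hκpos : 0 < κ := div_pos hb hds
  have hκlt : κ < 1 := (div_lt_one hds).mpr (by nlinarith)
  have h2b : 2 * b / (2 * s) = b / s := by
    rw [mul_div_mul_left _ _ (two_ne_zero)]
  rw [h2b]
  have hne : d / 2 + s ≠ 0 := ne_of_gt hds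
  have hne2 : d + s * 2 ≠ 0 := by intro h; apply hne; linarith
  have hone : 1 - κ ^ 2 = 2 * s / (d / 2 + s) := by
    rw [hκdef]
    field_simp [hne2, show d + 2 * s ≠ 0 by intro h; apply hne; linarith]
    nlinarith [hs2]
  have harc : Real.arctan (b / s) = 2 * Real.arctan κ := by
    have htan : Real.tan (2 * Real.arctan κ) = b / s := by
      rw [Real.tan_two_mul, Real.tan_arctan, hone, hκdef]
      rw [← mul_div_assoc]
      field_simp
      ring_nf
      field_simp
    rw [← htan, Real.arctan_tan]
    · have h0 : Real.arctan 0 < Real.arctan κ := Real.arctan_strictMono hκpos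
      rw [Real.arctan_zero] at h0
      linarith [Real.pi_pos]
    · have h1 : Real.arctan κ < Real.arctan 1 := Real.arctan_strictMono hκlt
      rw [Real.arctan_one] at h1
      linarith
  rw [harc]
  rw [show 1 / 2 * (2 * Real.arctan κ) = Real.arctan κ by ring, Real.tan_arctan]
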